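/- (Proposition 4, first part.) Let Λ be a return-covariance based cross-impact model (a map (Σ,Ω) ↦ Λ(Σ,Ω), Σ symmetric positive semidefinite, Ω symmetric positive definite, not depending on R) which is split-invariant and rotation-invariant. Then for every such (Σ,Ω), every invertible real matrix L with Ω = L Lᵀ, and every real orthogonal matrix U such that Uᵀ (Lᵀ Σ L) U = diag(μ) is diagonal, one has Λ(Σ,Ω) = (L⁻¹)ᵀ · U · Λ(diag(μ), I) · Uᵀ · L⁻¹, i.e. Λ is completely determined by its values F(μ) := Λ(diag(μ), I) on pairs of a diagonal matrix and the identity. -/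

import Mathlib

open Matrix
open scoped Classical

/-- `sqrtm A` is the unique symmetric positive semidefinite square root of a
symmetric positive semidefinite real matrix `A` (junk value `0` otherwise). -/
noncomputable def sqrtm {n : ℕ} (A : Matrix (Fin n) (Fin n) ℝ) : Matrix (Fin n) (Fin n) ℝ :=
  if h : A.PosSemidef then
    (h.1.eigenvectorUnitary : Matrix (Fin n) (Fin n) ℝ) *
      diagonal (RCLike.ofReal ∘ Real.sqrt ∘ h.1.eigenvalues) *
      (star h.1.eigenvectorUnitary : Matrix (Fin n) (Fin n) ℝ)
  else 0

/-- The Kyle cross-impact matrix `Λ_kyle(Σ,Ω) = (√Ω)⁻¹ √(√Ω Σ √Ω) (√Ω)⁻¹`. -/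
noncomputable def kyle {n : ℕ} (S W : Matrix (Fin n) (Fin n) ℝ) : Matrix (Fin n) (Fin n) ℝ :=
  (sqrtm W)⁻¹ * sqrtm (sqrtm W * S * sqrtm W) * (sqrtm W)⁻¹

/-- Proposition 4, first part: a split- and rotation-invariant
return-covariance based cross-impact model is determined by its values on
pairs of a diagonal matrix and the identity. -/
theorem return_based_split_rot_invariant_form {n : ℕ}
    (Λ : Matrix (Fin n) (Fin n) ℝ → Matrix (Fin n) (Fin n) ℝ → Matrix (Fin n) (Fin n) ℝ)
    (hsplit : ∀ S W : Matrix (Fin n) (Fin n) ℝ, S.PosSemidef → W.PosDef → ∀ d : Fin n → ℝ, (∀ i, 0 < d i) →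
      Λ ((diagonal d)⁻¹ * S * (diagonal d)⁻¹) (diagonal d * W * diagonal d)
        = (diagonal d)⁻¹ * Λ S W * (diagonal d)⁻¹)
    (hrot : ∀ S W : Matrix (Fin n) (Fin n) ℝ, S.PosSemidef → W.PosDef → ∀ O : Matrix (Fin n) (Fin n) ℝ, O * Oᵀ = 1 →
      Λ (O * S * Oᵀ) (O * W * Oᵀ) = O * Λ S W * Oᵀ)
    (S W : Matrix (Fin n) (Fin n) ℝ) (hS : S.PosSemidef) (hW : W.PosDef)
    (L : Matrix (Fin n) (Fin n) ℝ) (hL : IsUnit L.det) (hLW : W = L * Lᵀ)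
    (U : Matrix (Fin n) (Fin n) ℝ) (hU : U * Uᵀ = 1) (μ : Fin n → ℝ)
    (hdiag : Uᵀ * (Lᵀ * S * L) * U = diagonal μ) :
    Λ S W = (L⁻¹)ᵀ * (U * Λ (diagonal μ) 1 * Uᵀ) * L⁻¹ := by
  classical
  have hct : ∀ A : Matrix (Fin n) (Fin n) ℝ, Aᴴ = Aᵀ := fun A =>
    conjTranspose_eq_transpose_of_trivial A
  -- spectral data for W
  set Q : Matrix (Fin n) (Fin n) ℝ := (hW.1.eigenvectorUnitary : Matrix (Fin n) (Fin n) ℝ)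
    with hQdef
  set w : Fin n → ℝ := hW.1.eigenvalues with hwdef
  have hw : ∀ i, 0 < w i := fun i => hW.eigenvalues_pos i
  have hQo : Q * Qᵀ = 1 := by
    have := (Matrix.mem_unitaryGroup_iff).mp (hW.1.eigenvectorUnitary).2
    simpa [hQdef, Matrix.star_eq_conjTranspose, hct] using this
  have hQo' : Qᵀ * Q = 1 := mul_eq_one_comm.mp hQo
  have hSpec : W = Q * diagonal w * Qᵀ := by
    have := hW.1.spectral_theorem
    simpa [hQdef, hwdef, RCLike.ofReal_real_eq_id, Matrix.star_eq_conjTranspose, hct] using this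
  -- square roots of eigenvalues
  set d : Fin n → ℝ := fun i => Real.sqrt (w i) with hddef
  have hd : ∀ i, 0 < d i := fun i => Real.sqrt_pos.mpr (hw i)
  set Dd : Matrix (Fin n) (Fin n) ℝ := diagonal d with hDdef
  have hdet : IsUnit Dd.det := by
    rw [hDdef, det_diagonal]
    exact isUnit_iff_ne_zero.mpr (ne_of_gt (Finset.prod_pos fun i _ => hd i))
  have hDdi : Dd * Dd⁻¹ = 1 := mul_nonsing_inv _ hdet
  have hDdi' : Dd⁻¹ * Dd = 1 := nonsing_inv_mul _ hdet
  have hDT : (Dd⁻¹)ᵀ = Dd⁻¹ := by rw [transpose_nonsing_inv, hDdef, diagonal_transpose]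
  have hDD : Dd * Dd = diagonal w := by
    rw [hDdef, diagonal_mul_diagonal]
    exact congrArg diagonal (funext fun i => Real.mul_self_sqrt (hw i).le)
  have hLL : L * L⁻¹ = 1 := mul_nonsing_inv _ hL
  have hLL' : L⁻¹ * L = 1 := nonsing_inv_mul _ hL
  have hU' : Uᵀ * U = 1 := mul_eq_one_comm.mp hU
  -- cancellation helpers
  have cancel : ∀ X Y : Matrix (Fin n) (Fin n) ℝ, X * Y = 1 →
      ∀ A : Matrix (Fin n) (Fin n) ℝ, X * (Y * A) = A := by
    intro X Y h A; rw [← mul_assoc, h, one_mul]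
  have swap : ∀ X Y Z : Matrix (Fin n) (Fin n) ℝ, X * Y = Z →
      ∀ A : Matrix (Fin n) (Fin n) ℝ, X * (Y * A) = Z * A := by
    intro X Y Z h A; rw [← mul_assoc, h]
  -- orthogonal matrices V and O₂
  set V : Matrix (Fin n) (Fin n) ℝ := Dd⁻¹ * (Qᵀ * L) with hVdef
  have hLLT : ∀ A : Matrix (Fin n) (Fin n) ℝ, L * (Lᵀ * A) = Q * (Dd * (Dd * (Qᵀ * A))) := by
    intro A
    have h1 : L * Lᵀ = Q * (Dd * (Dd * Qᵀ)) := by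
      rw [← hLW, hSpec, ← hDD]; noncomm_ring
    rw [← mul_assoc, h1]; noncomm_ring
  have hVo : V * Vᵀ = 1 := by
    rw [hVdef]
    simp only [transpose_mul, transpose_transpose, hDT, mul_assoc]
    simp only [hLLT, cancel _ _ hQo', cancel _ _ hDdi', hDdi, hDdi', mul_one,
      cancel _ _ hQo, cancel _ _ hDdi, swap _ _ _ hDdi']
  have hVo' : Vᵀ * V = 1 := mul_eq_one_comm.mp hVo
  set O₂ : Matrix (Fin n) (Fin n) ℝ := V * U with hO₂def
  have hO₂o : O₂ * O₂ᵀ = 1 := by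
    rw [hO₂def, transpose_mul, mul_assoc, cancel _ _ hU, hVo]
  -- positive semidefiniteness
  have hμPSD : (diagonal μ).PosSemidef := by
    rw [← hdiag]
    have h1 := hS.conjTranspose_mul_mul_same L
    rw [hct] at h1
    have h2 := h1.conjTranspose_mul_mul_same U
    rwa [hct] at h2
  have hS₁PSD : (O₂ * diagonal μ * O₂ᵀ).PosSemidef := by
    have := hμPSD.mul_mul_conjTranspose_same O₂
    rwa [hct] at this
  have hS₂PSD : (Dd⁻¹ * (O₂ * diagonal μ * O₂ᵀ) * Dd⁻¹).PosSemidef := by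
    have := hS₁PSD.mul_mul_conjTranspose_same Dd⁻¹
    rwa [hct, hDT] at this
  -- the three invariance steps
  have step1 : Λ (O₂ * diagonal μ * O₂ᵀ) 1 = O₂ * Λ (diagonal μ) 1 * O₂ᵀ := by
    have := hrot (diagonal μ) 1 hμPSD Matrix.PosDef.one O₂ hO₂o
    rwa [mul_one, hO₂o] at this
  have step2 : Λ (Dd⁻¹ * (O₂ * diagonal μ * O₂ᵀ) * Dd⁻¹) (diagonal w)
      = Dd⁻¹ * (O₂ * Λ (diagonal μ) 1 * O₂ᵀ) * Dd⁻¹ := by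
    have := hsplit (O₂ * diagonal μ * O₂ᵀ) 1 hS₁PSD Matrix.PosDef.one d hd
    rw [← hDdef] at this
    rw [← step1]
    rwa [mul_one, hDD] at this
  have step3 : Λ (Q * (Dd⁻¹ * (O₂ * diagonal μ * O₂ᵀ) * Dd⁻¹) * Qᵀ) (Q * diagonal w * Qᵀ)
      = Q * (Dd⁻¹ * (O₂ * Λ (diagonal μ) 1 * O₂ᵀ) * Dd⁻¹) * Qᵀ := by
    rw [hrot _ _ hS₂PSD (Matrix.PosDef.diagonal hw) Q hQo, step2]
  -- identify the first argument with S
  have hSid : Q * (Dd⁻¹ * (O₂ * diagonal μ * O₂ᵀ) * Dd⁻¹) * Qᵀ = S := by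
    rw [← hdiag, hO₂def, hVdef]
    simp only [transpose_mul, transpose_transpose, hDT, mul_assoc]
    simp only [hLLT, cancel _ _ hQo', cancel _ _ hDdi', cancel _ _ hU, cancel _ _ hU',
      cancel _ _ hQo, cancel _ _ hDdi, cancel _ _ hLL, cancel _ _ hLL',
      hQo, hQo', hDdi, hDdi', hLL, hLL', hU, hU', mul_one]
  -- key identity for the final algebra
  have hKey : Q * (Dd⁻¹ * O₂) = (L⁻¹)ᵀ * U := by
    have h1 : Lᵀ * (Q * (Dd⁻¹ * (Dd⁻¹ * (Qᵀ * L)))) = 1 := by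
      have := hVo'
      rw [hVdef] at this
      simp only [transpose_mul, transpose_transpose, hDT, mul_assoc] at this
      simpa [mul_assoc] using this
    have h2 : (Lᵀ)⁻¹ = Q * (Dd⁻¹ * (Dd⁻¹ * (Qᵀ * L))) := inv_eq_right_inv h1
    rw [hO₂def, hVdef, transpose_nonsing_inv, h2]
    noncomm_ring
  have hKeyT : O₂ᵀ * (Dd⁻¹ * Qᵀ) = Uᵀ * L⁻¹ := by
    have := congrArg Matrix.transpose hKey
    simpa only [transpose_mul, transpose_transpose, hDT, mul_assoc] using this
  -- conclude
  calc Λ S W = Λ (Q * (Dd⁻¹ * (O₂ * diagonal μ * O₂ᵀ) * Dd⁻¹) * Qᵀ) (Q * diagonal w * Qᵀ) := by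
        rw [hSid, ← hSpec]
    _ = Q * (Dd⁻¹ * (O₂ * Λ (diagonal μ) 1 * O₂ᵀ) * Dd⁻¹) * Qᵀ := step3
    _ = (Q * (Dd⁻¹ * O₂)) * Λ (diagonal μ) 1 * (O₂ᵀ * (Dd⁻¹ * Qᵀ)) := by noncomm_ring
    _ = (L⁻¹)ᵀ * (U * Λ (diagonal μ) 1 * Uᵀ) * L⁻¹ := by rw [hKey, hKeyT]; noncomm_ring
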